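/- For all positive integers p and q with p ≥ q, the covering radius of the (p,q)-type group G_{p,q} in S_{p+q} is at most p + ⌊(√(q + 1/8) − √2/2)² − 1/8⌋. -/

import Mathlib

open Equiv

/-- The ℓ∞-distance between two permutations of `Fin n`. -/
noncomputable def linfDist {n : ℕ} (f g : Perm (Fin n)) : ℕ :=
  Finset.univ.sup fun i : Fin n => (((f i).val : ℤ) - ((g i).val : ℤ)).natAbs

/-- The distance from a permutation to a code `C`. -/
noncomputable def distToCode {n : ℕ} (f : Perm (Fin n)) (C : Set (Perm (Fin n))) : ℕ :=
  sInf (linfDist f '' C)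

/-- The covering radius of a code `C ⊆ Sₙ`. -/
noncomputable def coveringRadius {n : ℕ} (C : Set (Perm (Fin n))) : ℕ :=
  sSup (Set.range fun f : Perm (Fin n) => distToCode f C)

/-- The relabeling `C^π = π C π⁻¹`. -/
def conjCode {n : ℕ} (π : Perm (Fin n)) (C : Set (Perm (Fin n))) : Set (Perm (Fin n)) :=
  (fun g => π * g * π⁻¹) '' C

/-- Maximum covering radius over all relabelings. -/
noncomputable def Lmax {n : ℕ} (C : Set (Perm (Fin n))) : ℕ :=
  sSup (Set.range fun π : Perm (Fin n) => coveringRadius (conjCode π C))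

/-- Minimum covering radius over all relabelings. -/
noncomputable def Lmin {n : ℕ} (C : Set (Perm (Fin n))) : ℕ :=
  sInf (Set.range fun π : Perm (Fin n) => coveringRadius (conjCode π C))

/-- The `(p,q)`-type group `G_{p,q} = ⟨(1,…,p), (p+1,…,p+q)⟩ ⊆ S_{p+q}`
(using `0`-indexed `Fin (p+q)`). -/
def Gpq (p q : ℕ) : Subgroup (Perm (Fin (p + q))) :=
  Subgroup.closure
    { ((List.finRange p).map (Fin.castLE (Nat.le_add_right p q))).formPerm,
      ((List.finRange q).map (Fin.natAdd p)).formPerm }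

/-- The transitive cyclic group `Gₙ = ⟨(1,2,…,n)⟩`. -/
def Gcyc (n : ℕ) : Subgroup (Perm (Fin n)) := Subgroup.closure {finRotate n}

/-- The natural dihedral group
`Dₙ = ⟨(1,2,…,n), ∏_{i=1}^{⌊n/2⌋} (i, n-i)⟩` (using `0`-indexed `Fin n`). -/
def Dn (n : ℕ) : Subgroup (Perm (Fin n)) :=
  Subgroup.closure
    { finRotate n,
      (((List.finRange (n / 2)).map fun i =>
        Equiv.swap (⟨i.val, by have := i.isLt; omega⟩ : Fin n)
          (⟨n - 2 - i.val, by have := i.isLt; omega⟩ : Fin n)).prod) }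


theorem block1_apply (p q a : ℕ) (x : Fin (p+q)) :
    ((((List.finRange p).map (Fin.castLE (Nat.le_add_right p q))).formPerm ^ a) x).val
      = if x.val < p then (x.val + a) % p else x.val := by
  set l : List (Fin (p+q)) := (List.finRange p).map (Fin.castLE (Nat.le_add_right p q)) with hl
  have hlen : l.length = p := by simp [hl]
  have hnd : l.Nodup := (List.nodup_finRange p).map (Fin.castLE_injective _)
  have hget : ∀ (i : ℕ) (h : i < l.length), (l[i]).val = i := by
    intro i h
    simp [hl]
  by_cases hx : x.val < p
  · have hx' : x = l[x.val]'(by omega) := by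
      apply Fin.ext
      rw [hget]
    have h2 : ((l.formPerm ^ a) x).val = (x.val + a) % l.length := by
      conv_lhs => rw [hx']
      rw [List.formPerm_pow_apply_getElem l hnd a x.val (by omega), hget]
    rw [h2, hlen, if_pos hx]
  · have hmem : x ∉ l := by
      intro hmem
      simp only [hl, List.mem_map] at hmem
      obtain ⟨y, -, rfl⟩ := hmem
      exact hx y.isLt
    have h1 : l.formPerm x = x := List.formPerm_apply_of_notMem hmem
    have : ∀ m : ℕ, (l.formPerm ^ m) x = x := by
      intro m
      induction m with
      | zero => simp
      | succ k ih => rw [pow_succ, Equiv.Perm.mul_apply, h1, ih]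
    rw [this, if_neg hx]

theorem block2_apply (p q b : ℕ) (x : Fin (p+q)) :
    ((((List.finRange q).map (Fin.natAdd p)).formPerm ^ b) x).val
      = if p ≤ x.val then p + ((x.val - p + b) % q) else x.val := by
  set l : List (Fin (p+q)) := (List.finRange q).map (Fin.natAdd p) with hl
  have hlen : l.length = q := by simp [hl]
  have hnd : l.Nodup := (List.nodup_finRange q).map fun y z h => by
    simpa [Fin.natAdd, Fin.ext_iff] using h
  have hget : ∀ (i : ℕ) (h : i < l.length), (l[i]).val = p + i := by
    intro i h
    simp [hl, Fin.natAdd]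
  by_cases hx : p ≤ x.val
  · have hlt : x.val - p < l.length := by omega
    have hx' : x = l[x.val - p]'hlt := by
      apply Fin.ext
      rw [hget]
      omega
    have h2 : ((l.formPerm ^ b) x).val = p + ((x.val - p + b) % l.length) := by
      conv_lhs => rw [hx']
      rw [List.formPerm_pow_apply_getElem l hnd b (x.val - p) hlt, hget]
    rw [h2, hlen, if_pos hx]
  · have hmem : x ∉ l := by
      intro hmem
      simp only [hl, List.mem_map] at hmem
      obtain ⟨y, -, rfl⟩ := hmem
      exact hx (Nat.le_add_right p y)
    have h1 : l.formPerm x = x := List.formPerm_apply_of_notMem hmem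
    have : ∀ m : ℕ, (l.formPerm ^ m) x = x := by
      intro m
      induction m with
      | zero => simp
      | succ k ih => rw [pow_succ, Equiv.Perm.mul_apply, h1, ih]
    rw [this, if_neg hx]


theorem sumA (D : ℕ) : ∀ n : ℕ, 2 * ∑ x ∈ Finset.range n, (x - D) ≤ (n - D) * (n - D - 1)
  | 0 => by simp
  | (m+1) => by
    rw [Finset.sum_range_succ, Nat.mul_add]
    have ih := sumA D m
    rcases le_or_gt D m with h | h
    · obtain ⟨e, rfl⟩ : ∃ e, m = D + e := ⟨m - D, by omega⟩
      have h1 : D + e - D = e := by omega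
      have h2 : D + e + 1 - D = e + 1 := by omega
      rw [h1] at ih ⊢
      rw [h2]
      have hx : (e + 1) * (e + 1 - 1) = e * (e - 1) + 2 * e := by
        cases e with
        | zero => simp
        | succ e' =>
          simp only [Nat.add_sub_cancel, Nat.succ_sub_one]
          ring
      omega
    · have h1 : m - D = 0 := by omega
      have h2 : m + 1 - D = 0 ∨ m + 1 - D = 1 := by omega
      rcases h2 with h2 | h2 <;> simp [h1, h2] at ih ⊢ <;> omega

theorem sumB0 : ∀ K : ℕ, 2 * ∑ x ∈ Finset.range K, (K - x) = K * (K + 1)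
  | 0 => by simp
  | (m+1) => by
    have hstep : ∑ x ∈ Finset.range (m+1), (m + 1 - x)
        = (∑ x ∈ Finset.range m, (m - x)) + (m + 1) := by
      rw [Finset.sum_range_succ]
      have hcong : ∀ x ∈ Finset.range m, (m + 1 - x) = (m - x) + 1 := by
        intro x hx
        have := Finset.mem_range.1 hx
        omega
      rw [Finset.sum_congr rfl hcong, Finset.sum_add_distrib]
      simp
      omega
    have ih := sumB0 m
    have hx : (m+1) * (m+1+1) = m * (m+1) + 2 * (m+1) := by ring
    rw [hstep]
    omega

theorem sumB (K : ℕ) (S : Finset ℕ) : 2 * ∑ x ∈ S, (K - x) ≤ K * (K + 1) := by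
  have hsub : S.filter (· < K) ⊆ Finset.range K := fun x hx => by
    simp only [Finset.mem_filter] at hx
    exact Finset.mem_range.2 hx.2
  have h1 : ∑ x ∈ S, (K - x) = ∑ x ∈ S.filter (· < K), (K - x) := by
    rw [Finset.sum_filter_of_ne]
    intro x _ hne
    by_contra h
    exact hne (by omega)
  have h2 : ∑ x ∈ S.filter (· < K), (K - x) ≤ ∑ x ∈ Finset.range K, (K - x) :=
    Finset.sum_le_sum_of_subset hsub
  have h3 := sumB0 K
  omega

theorem pigeon (p : ℕ) (P : ℕ → ℕ → Prop) [DecidablePred fun x : ℕ × ℕ => P x.1 x.2]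
    (h : ((Finset.range p ×ˢ Finset.range p).filter fun x : ℕ × ℕ => P x.1 x.2).card < p) :
    ∃ a < p, ∀ i < p, ¬ P i a := by
  by_contra hc
  push_neg at hc
  have hsub : Finset.range p ⊆ ((Finset.range p ×ˢ Finset.range p).filter
      fun x : ℕ × ℕ => P x.1 x.2).image Prod.snd := by
    intro a ha
    obtain ⟨i, hi, hP⟩ := hc a (Finset.mem_range.1 ha)
    exact Finset.mem_image.2 ⟨(i, a), Finset.mem_filter.2
      ⟨Finset.mem_product.2 ⟨Finset.mem_range.2 hi, ha⟩, hP⟩, rfl⟩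
  have h2 := (Finset.card_le_card hsub).trans Finset.card_image_le
  rw [Finset.card_range] at h2
  omega


theorem floor_ge (q t : ℕ) (ht : 2*q ≤ t*(t+1)) :
    (q:ℤ) - t ≤ ⌊(Real.sqrt ((q : ℝ) + 1 / 8) - Real.sqrt 2 / 2) ^ 2 - 1 / 8⌋ := by
  rw [Int.le_floor]
  have hA : (0:ℝ) ≤ (q:ℝ) + 1/8 := by positivity
  have hs := Real.sq_sqrt hA
  have h2 := Real.sq_sqrt (by norm_num : (0:ℝ) ≤ 2)
  have hkey : Real.sqrt 2 * Real.sqrt ((q:ℝ)+1/8) ≤ (t:ℝ) + 1/2 := by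
    rw [← Real.sqrt_mul (by norm_num : (0:ℝ) ≤ 2)]
    have hb : 2 * ((q:ℝ)+1/8) ≤ ((t:ℝ)+1/2)^2 := by
      have hc : (2*q:ℝ) ≤ (t:ℝ)*((t:ℝ)+1) := by exact_mod_cast ht
      nlinarith
    calc Real.sqrt (2*((q:ℝ)+1/8)) ≤ Real.sqrt (((t:ℝ)+1/2)^2) := Real.sqrt_le_sqrt hb
      _ = (t:ℝ)+1/2 := Real.sqrt_sq (by positivity)
  push_cast
  nlinarith [hs, h2, hkey, Real.sqrt_nonneg ((q:ℝ)+1/8), Real.sqrt_nonneg 2]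

theorem mod_add_cancel {p i : ℕ} {a b : ℕ} (ha : a < p) (hb : b < p)
    (h : (i+a) % p = (i+b) % p) : a = b := by
  have h2 : a % p = b % p := Nat.ModEq.add_left_cancel' i h
  rwa [Nat.mod_eq_of_lt ha, Nat.mod_eq_of_lt hb] at h2

theorem card_fiberwise_le (p : ℕ) (P : ℕ → ℕ → Prop)
    [DecidablePred fun x : ℕ × ℕ => P x.1 x.2] [∀ i, DecidablePred (P i)] (c : ℕ → ℕ)
    (hcount : ∀ i < p, ((Finset.range p).filter (P i)).card ≤ c i) :
    ((Finset.range p ×ˢ Finset.range p).filter fun x : ℕ × ℕ => P x.1 x.2).card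
      ≤ ∑ i ∈ Finset.range p, c i := by
  rw [Finset.card_eq_sum_card_fiberwise
    (f := Prod.fst) (t := Finset.range p)
    (fun x hx => (Finset.mem_product.1 (Finset.mem_filter.1 hx).1).1)]
  apply Finset.sum_le_sum
  intro i hi
  refine le_trans ?_ (hcount i (Finset.mem_range.1 hi))
  apply Finset.card_le_card_of_injOn Prod.snd
  · intro x hx
    simp only [Finset.mem_coe, Finset.mem_filter, Finset.mem_product, Finset.mem_range] at hx ⊢
    obtain ⟨⟨⟨-, h2⟩, hP⟩, h1⟩ := hx
    exact ⟨h2, h1 ▸ hP⟩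
  · intro x hx y hy hxy
    simp only [Finset.mem_coe, Finset.mem_filter] at hx hy
    exact Prod.ext (hx.2.trans hy.2.symm) hxy

theorem Gpq_mem1 (p q : ℕ) :
    ((List.finRange p).map (Fin.castLE (Nat.le_add_right p q))).formPerm ∈ Gpq p q :=
  Subgroup.subset_closure (Set.mem_insert _ _)

theorem Gpq_mem2 (p q : ℕ) :
    ((List.finRange q).map (Fin.natAdd p)).formPerm ∈ Gpq p q :=
  Subgroup.subset_closure (Set.mem_insert_of_mem _ rfl)

theorem Gpq_mem (p q a b : ℕ) :
    (((List.finRange p).map (Fin.castLE (Nat.le_add_right p q))).formPerm ^ a *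
     ((List.finRange q).map (Fin.natAdd p)).formPerm ^ b)
      ∈ (Gpq p q : Set (Perm (Fin (p+q)))) :=
  Subgroup.mul_mem _ (Subgroup.pow_mem _ (Gpq_mem1 p q) a)
    (Subgroup.pow_mem _ (Gpq_mem2 p q) b)

theorem key_lemma (p q t : ℕ) (hq : 1 ≤ q) (hpq : q ≤ p) (ht1 : 1 ≤ t) (htq : t ≤ q)
    (htlow : t * (t-1) < 2*q) (f : Perm (Fin (p+q))) :
    ∃ g ∈ (Gpq p q : Set (Perm (Fin (p+q)))), linfDist f g ≤ p + q - t := by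
  classical
  set F : ℕ → ℕ := fun i => if h : i < p + q then ((f ⟨i, h⟩ : Fin (p+q)) : ℕ) else i with hF
  have hFlt : ∀ i < p + q, F i < p + q := by
    intro i h
    simp only [hF, dif_pos h]
    exact (f ⟨i, h⟩).isLt
  have hFinj : ∀ i < p + q, ∀ j < p + q, F i = F j → i = j := by
    intro i hi j hj h
    simp only [hF, dif_pos hi, dif_pos hj] at h
    have := f.injective (Fin.ext h)
    simpa [Fin.ext_iff] using this
  have hFx : ∀ x : Fin (p+q), F x.val = ((f x : Fin (p+q)) : ℕ) := by
    intro x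
    simp only [hF, dif_pos x.isLt, Fin.eta]
  -- Block 1: find a good shift a
  have hcount1 : ∀ i < p,
      ((Finset.range p).filter (fun a => p + q - t + (i + a) % p < F i)).card ≤ F i - (p+q-t) := by
    intro i hi
    rw [← Finset.card_range (F i - (p+q-t))]
    apply Finset.card_le_card_of_injOn (fun a => (i + a) % p)
    · intro a ha
      simp only [Finset.mem_coe, Finset.mem_filter, Finset.mem_range] at ha ⊢
      omega
    · intro a ha b hb hab
      simp only [Finset.mem_coe, Finset.mem_filter, Finset.mem_range] at ha hb
      exact mod_add_cancel ha.1 hb.1 hab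
  have hbad1 : ((Finset.range p ×ˢ Finset.range p).filter
      fun x : ℕ × ℕ => p + q - t + (x.1 + x.2) % p < F x.1).card < p := by
    have h1 : ((Finset.range p ×ˢ Finset.range p).filter
        fun x : ℕ × ℕ => p + q - t + (x.1 + x.2) % p < F x.1).card
          ≤ ∑ i ∈ Finset.range p, (F i - (p+q-t)) :=
      card_fiberwise_le p (fun i a => p + q - t + (i + a) % p < F i)
        (fun i => F i - (p+q-t)) hcount1
    have h2 : ∑ i ∈ Finset.range p, (F i - (p+q-t))
        = ∑ x ∈ (Finset.range p).image F, (x - (p+q-t)) := by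
      rw [Finset.sum_image]
      intro i hi j hj h
      exact hFinj i (by have := Finset.mem_range.1 hi; omega) j
        (by have := Finset.mem_range.1 hj; omega) h
    have h3 : ∑ x ∈ (Finset.range p).image F, (x - (p+q-t))
        ≤ ∑ x ∈ Finset.range (p+q), (x - (p+q-t)) := by
      apply Finset.sum_le_sum_of_subset
      intro x hx
      obtain ⟨i, hi, rfl⟩ := Finset.mem_image.1 hx
      exact Finset.mem_range.2 (hFlt i (by have := Finset.mem_range.1 hi; omega))
    have h4 := sumA (p+q-t) (p+q)
    have h5 : (p + q - (p+q-t)) * (p + q - (p+q-t) - 1) = t * (t-1) := by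
      have he : p + q - (p+q-t) = t := by omega
      rw [he]
    omega
  obtain ⟨a, ha, hgood1⟩ := pigeon p (fun i a => p + q - t + (i + a) % p < F i) hbad1
  -- Block 2: find a good shift b
  have hcount2 : ∀ j < q,
      ((Finset.range q).filter (fun b => p + q - t + F (p + j) < p + (j + b) % q)).card
        ≤ (t - 1) - F (p + j) := by
    intro j hj
    rw [← Finset.card_range ((t - 1) - F (p + j))]
    apply Finset.card_le_card_of_injOn (fun b => (j + b) % q - (q - t + F (p+j) + 1))
    · intro b hb
      simp only [Finset.mem_coe, Finset.mem_filter, Finset.mem_range] at hb ⊢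
      have := Nat.mod_lt (j + b) (show 0 < q by omega)
      omega
    · intro b hb b' hb' hbb
      simp only [Finset.mem_coe, Finset.mem_filter, Finset.mem_range] at hb hb'
      have hbb' : (j + b) % q - (q - t + F (p+j) + 1)
          = (j + b') % q - (q - t + F (p+j) + 1) := hbb
      have h1 : (j + b) % q = (j + b') % q := by
        have hx := Nat.mod_lt (j + b) (show 0 < q by omega)
        have hy := Nat.mod_lt (j + b') (show 0 < q by omega)
        omega
      exact mod_add_cancel hb.1 hb'.1 h1
  have hbad2 : ((Finset.range q ×ˢ Finset.range q).filter
      fun x : ℕ × ℕ => p + q - t + F (p + x.1) < p + (x.1 + x.2) % q).card < q := by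
    have h1 : ((Finset.range q ×ˢ Finset.range q).filter
        fun x : ℕ × ℕ => p + q - t + F (p + x.1) < p + (x.1 + x.2) % q).card
          ≤ ∑ j ∈ Finset.range q, ((t-1) - F (p + j)) :=
      card_fiberwise_le q (fun j b => p + q - t + F (p + j) < p + (j + b) % q)
        (fun j => (t - 1) - F (p + j)) hcount2
    have h2 : ∑ j ∈ Finset.range q, ((t-1) - F (p + j))
        = ∑ x ∈ (Finset.range q).image (fun j => F (p + j)), ((t-1) - x) := by
      rw [Finset.sum_image]
      intro i hi j hj h
      have := hFinj (p+i) (by have := Finset.mem_range.1 hi; omega) (p+j)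
        (by have := Finset.mem_range.1 hj; omega) h
      omega
    have h3 := sumB (t-1) ((Finset.range q).image (fun j => F (p + j)))
    have h4 : (t-1) * (t-1+1) = t * (t-1) := by
      have he : t - 1 + 1 = t := by omega
      rw [he, Nat.mul_comm]
    omega
  obtain ⟨b, hb, hgood2⟩ := pigeon q
    (fun j b => p + q - t + F (p + j) < p + (j + b) % q) hbad2
  -- distance bound for any permutation with the right values
  have hdist : ∀ g : Perm (Fin (p+q)),
      (∀ x : Fin (p+q), ((g x : Fin (p+q)) : ℕ)
        = if x.val < p then (x.val + a) % p else p + ((x.val - p + b) % q)) →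
      linfDist f g ≤ p + q - t := by
    intro g hgall
    apply Finset.sup_le
    intro x _
    have hgx := hgall x
    by_cases hx : x.val < p
    · rw [if_pos hx] at hgx
      have hnb := hgood1 x.val hx
      rw [hFx x] at hnb
      have hmod : (x.val + a) % p < p := Nat.mod_lt _ (by omega)
      have hflt := (f x).isLt
      omega
    · rw [if_neg hx] at hgx
      have hnb := hgood2 (x.val - p) (by have := x.isLt; omega)
      have hpj : p + (x.val - p) = x.val := by have := x.isLt; omega
      rw [hpj, hFx x] at hnb
      have hmod : (x.val - p + b) % q < q := Nat.mod_lt _ (by omega)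
      have hflt := (f x).isLt
      omega
  refine ⟨((List.finRange p).map (Fin.castLE (Nat.le_add_right p q))).formPerm ^ a *
      ((List.finRange q).map (Fin.natAdd p)).formPerm ^ b, ?_, hdist _ ?_⟩
  · exact Gpq_mem p q a b
  · intro x
    rw [Equiv.Perm.mul_apply]
    have h2 := block2_apply p q b x
    have h1 := block1_apply p q a
      ((((List.finRange q).map (Fin.natAdd p)).formPerm ^ b) x)
    by_cases hx : x.val < p
    · rw [if_pos hx]
      rw [if_neg (by omega)] at h2
      rw [h2, if_pos hx] at h1
      exact h1
    · rw [if_neg hx]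
      rw [if_pos (by omega)] at h2
      rw [h2, if_neg (by omega)] at h1
      exact h1

/-- For all positive integers `p ≥ q`, the covering radius of `G_{p,q}` in
`S_{p+q}` is at most `p + ⌊(√(q + 1/8) − √2/2)² − 1/8⌋`. -/
theorem stmt_1 (p q : ℕ) (hq : 1 ≤ q) (hpq : q ≤ p) :
    (coveringRadius (Gpq p q : Set (Perm (Fin (p + q)))) : ℤ) ≤
      (p : ℤ) + ⌊(Real.sqrt ((q : ℝ) + 1 / 8) - Real.sqrt 2 / 2) ^ 2 - 1 / 8⌋ := by
  have hex : ∃ t : ℕ, 2*q ≤ t*(t+1) := ⟨q, by nlinarith⟩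
  have ht2 : 2*q ≤ (Nat.find hex)*(Nat.find hex + 1) := Nat.find_spec hex
  set t := Nat.find hex with htdef
  have ht1 : 1 ≤ t := by
    rcases Nat.eq_zero_or_pos t with h | h
    · rw [h] at ht2; omega
    · exact h
  have htlow : t * (t-1) < 2*q := by
    have hm := Nat.find_min hex (show t - 1 < t by omega)
    push_neg at hm
    rcases Nat.lt_or_ge 1 t with h | h
    · have he : t - 1 + 1 = t := by omega
      rw [he] at hm
      rw [Nat.mul_comm]
      exact hm
    · have he : t = 1 := by omega
      rw [he]
      simp
      omega
  have htq : t ≤ q := by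
    by_contra h
    push_neg at h
    have h1 : (q+1) * q ≤ t * (t-1) := Nat.mul_le_mul (by omega) (by omega)
    nlinarith
  have hcr : coveringRadius (Gpq p q : Set (Perm (Fin (p+q)))) ≤ p + q - t := by
    apply csSup_le (Set.range_nonempty _)
    rintro x ⟨f, rfl⟩
    obtain ⟨g, hg, hd⟩ := key_lemma p q t hq hpq ht1 htq htlow f
    exact le_trans (Nat.sInf_le ⟨g, hg, rfl⟩) hd
  have hfl := floor_ge q t ht2
  have hcast : (coveringRadius (Gpq p q : Set (Perm (Fin (p+q)))) : ℤ) ≤ (p:ℤ) + ((q:ℤ) - t) := by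
    have h2 : ((coveringRadius (Gpq p q : Set (Perm (Fin (p+q)))) : ℕ) : ℤ)
        ≤ ((p + q - t : ℕ) : ℤ) := by exact_mod_cast hcr
    omega
  linarith [hfl, hcast]
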